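/- arXiv:2302.06112 — 3 statements merged into one kernel-verified Lean document; each statement's English description precedes it below -/
import Mathlib

section
/- Let z ~ N(0, γ²) with γ > 0. Then Var[max(0, z)] = ((π − 1)/(2π)) γ². -/
open MeasureTheory ProbabilityTheory Real Set
open scoped ENNReal NNReal

private lemma relu_aux_pdf (γ : ℝ) (hγ : 0 < γ) (x : ℝ) :
    gaussianPDFReal 0 (Real.toNNReal (γ ^ 2)) x
      = (Real.sqrt (2 * π * γ ^ 2))⁻¹ * rexp (-((2 * γ ^ 2)⁻¹) * x ^ 2) := by
  have hv : ((Real.toNNReal (γ ^ 2)) : ℝ) = γ ^ 2 := Real.coe_toNNReal _ (sq_nonneg γ)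
  simp only [gaussianPDFReal, hv, sub_zero]
  congr 2
  field_simp

private lemma relu_aux_J (γ : ℝ) (hγ : 0 < γ) (n : ℕ) :
    ∫ x in Ioi (0:ℝ), x ^ n * rexp (-(2 * γ ^ 2)⁻¹ * x ^ 2)
      = ((2 * γ ^ 2)⁻¹ : ℝ) ^ (-((n : ℝ) + 1) / 2) * (1 / 2) * Real.Gamma (((n : ℝ) + 1) / 2) := by
  have hb : (0:ℝ) < (2 * γ ^ 2)⁻¹ := by positivity
  have := integral_rpow_mul_exp_neg_mul_rpow (p := 2) (q := (n : ℝ))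
    (b := (2 * γ ^ 2)⁻¹) zero_lt_two (neg_one_lt_zero.trans_le (Nat.cast_nonneg n)) hb
  rw [← this]
  refine setIntegral_congr_fun measurableSet_Ioi (fun x hx => ?_)
  rw [show ((2:ℝ)) = ((2:ℕ):ℝ) by norm_num, Real.rpow_natCast, Real.rpow_natCast]

private lemma relu_aux_ind (γ : ℝ) (hγ : 0 < γ) (n : ℕ) (hn : n ≠ 0) (x : ℝ) :
    gaussianPDFReal 0 (Real.toNNReal (γ ^ 2)) x * (max 0 x) ^ n
      = (Ioi (0:ℝ)).indicator
          (fun y => (Real.sqrt (2 * π * γ ^ 2))⁻¹ * (y ^ n * rexp (-(2 * γ ^ 2)⁻¹ * y ^ 2))) x := by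
  rcases le_or_gt x 0 with hx | hx
  · rw [Set.indicator_of_notMem (by simpa using hx), max_eq_left hx, zero_pow hn, mul_zero]
  · rw [Set.indicator_of_mem (Set.mem_Ioi.2 hx), max_eq_right hx.le, relu_aux_pdf γ hγ]
    ring

private lemma relu_aux_int (γ : ℝ) (hγ : 0 < γ) (g : ℝ → ℝ) :
    ∫ x, g x ∂(gaussianReal 0 (Real.toNNReal (γ ^ 2)))
      = ∫ x, gaussianPDFReal 0 (Real.toNNReal (γ ^ 2)) x * g x := by
  set v := Real.toNNReal (γ ^ 2) with hvdef
  have hvne : v ≠ 0 := by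
    simp [hvdef, Real.toNNReal_eq_zero, not_le]
    positivity
  rw [gaussianReal_of_var_ne_zero 0 hvne]
  have hmeas : Measurable fun x => Real.toNNReal (gaussianPDFReal 0 v x) :=
    (measurable_gaussianPDFReal 0 v).real_toNNReal
  rw [show gaussianPDF 0 v = fun x => ((gaussianPDFReal 0 v x).toNNReal : ℝ≥0∞) from rfl]
  rw [integral_withDensity_eq_integral_smul hmeas]
  congr 1 with x
  rw [NNReal.smul_def, smul_eq_mul, Real.coe_toNNReal _ (gaussianPDFReal_nonneg 0 v x)]

/-- Variance of the ReLU of a centered Gaussian: if `z ~ N(0, γ²)` with `γ > 0`,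
then `Var[max(0, z)] = ((π − 1)/(2π)) γ²`. -/
theorem relu_gaussian_variance (γ : ℝ) (hγ : 0 < γ) :
    variance (fun z => max 0 z) (gaussianReal 0 (Real.toNNReal (γ ^ 2)))
      = ((Real.pi - 1) / (2 * Real.pi)) * γ ^ 2 := by
  set v := Real.toNNReal (γ ^ 2) with hvdef
  have hvne : v ≠ 0 := by
    simp [hvdef, Real.toNNReal_eq_zero, not_le]
    positivity
  have hb : (0:ℝ) < (2 * γ ^ 2)⁻¹ := by positivity
  set c : ℝ := (Real.sqrt (2 * π * γ ^ 2))⁻¹ with hc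
  -- integrability on ℝ
  have hint : ∀ n : ℕ, Integrable (fun y : ℝ => c * (y ^ n * rexp (-(2 * γ ^ 2)⁻¹ * y ^ 2))) := by
    intro n
    have h := integrable_rpow_mul_exp_neg_mul_sq hb
      (s := (n:ℝ)) (neg_one_lt_zero.trans_le (Nat.cast_nonneg n))
    simp_rw [Real.rpow_natCast] at h
    exact h.const_mul c
  have hI : ∀ n : ℕ, n ≠ 0 →
      Integrable (fun x => gaussianPDFReal 0 v x * (max 0 x) ^ n) := by
    intro n hn
    have heq : (fun x => gaussianPDFReal 0 v x * (max 0 x) ^ n)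
        = (Ioi (0:ℝ)).indicator
          (fun y => c * (y ^ n * rexp (-(2 * γ ^ 2)⁻¹ * y ^ 2))) :=
      funext (relu_aux_ind γ hγ n hn)
    rw [heq]
    exact (hint n).indicator measurableSet_Ioi
  -- moments
  have hE : ∀ n : ℕ, n ≠ 0 →
      ∫ x, (max 0 x) ^ n ∂(gaussianReal 0 v)
        = c * (((2 * γ ^ 2)⁻¹ : ℝ) ^ (-((n : ℝ) + 1) / 2) * (1 / 2)
            * Real.Gamma (((n : ℝ) + 1) / 2)) := by
    intro n hn
    rw [relu_aux_int γ hγ (fun x => (max 0 x) ^ n)]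
    rw [funext (relu_aux_ind γ hγ n hn)]
    rw [integral_indicator measurableSet_Ioi, integral_const_mul, relu_aux_J γ hγ n]
  -- Memℒp
  have hmeasmax : Measurable fun z : ℝ => max 0 z := measurable_const.max measurable_id
  have hmem : MemLp (fun z : ℝ => max 0 z) 2 (gaussianReal 0 v) := by
    refine (memLp_two_iff_integrable_sq hmeasmax.aestronglyMeasurable).2 ?_
    rw [gaussianReal_of_var_ne_zero 0 hvne]
    have hmeas : Measurable fun x => Real.toNNReal (gaussianPDFReal 0 v x) :=
      (measurable_gaussianPDFReal 0 v).real_toNNReal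
    rw [show gaussianPDF 0 v = fun x => ((gaussianPDFReal 0 v x).toNNReal : ℝ≥0∞) from rfl]
    rw [integrable_withDensity_iff_integrable_smul hmeas]
    have : (fun x => (gaussianPDFReal 0 v x).toNNReal • (max 0 x) ^ 2)
        = fun x => gaussianPDFReal 0 v x * (max 0 x) ^ 2 := by
      funext x
      rw [NNReal.smul_def, smul_eq_mul, Real.coe_toNNReal _ (gaussianPDFReal_nonneg 0 v x)]
    rw [this]
    exact hI 2 two_ne_zero
  rw [variance_eq_sub hmem]
  have h2 : (∫ x, ((fun z : ℝ => max 0 z) ^ 2) x ∂(gaussianReal 0 v))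
      = ∫ x, (max 0 x) ^ 2 ∂(gaussianReal 0 v) := by
    simp [Pi.pow_apply]
  have h1 : (∫ x, max 0 x ∂(gaussianReal 0 v)) = ∫ x, (max 0 x) ^ 1 ∂(gaussianReal 0 v) := by
    simp
  rw [h2, hE 2 two_ne_zero, h1, hE 1 one_ne_zero]
  -- arithmetic
  have h2γ : (0:ℝ) < 2 * γ ^ 2 := by positivity
  have e1 : ((2 * γ ^ 2)⁻¹ : ℝ) ^ (-((1:ℕ) + 1 : ℝ) / 2) = 2 * γ ^ 2 := by
    rw [show (-((1:ℕ) + 1 : ℝ) / 2) = (-1 : ℝ) by norm_num, Real.rpow_neg_one, inv_inv]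
  have e2 : ((2 * γ ^ 2)⁻¹ : ℝ) ^ (-((2:ℕ) + 1 : ℝ) / 2)
      = (2 * γ ^ 2) * Real.sqrt (2 * γ ^ 2) := by
    rw [show (-((2:ℕ) + 1 : ℝ) / 2) = -((3:ℝ)/2) by norm_num,
      Real.inv_rpow h2γ.le, ← Real.rpow_neg h2γ.le, neg_neg,
      show ((3:ℝ)/2) = 1 + 1/2 by norm_num, Real.rpow_add h2γ, Real.rpow_one,
      ← Real.sqrt_eq_rpow]
  have eg1 : Real.Gamma (((1:ℕ) + 1 : ℝ) / 2) = 1 := by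
    norm_num [Real.Gamma_one]
  have eg2 : Real.Gamma (((2:ℕ) + 1 : ℝ) / 2) = Real.sqrt π / 2 := by
    rw [show (((2:ℕ) + 1 : ℝ) / 2) = 1/2 + 1 by norm_num,
      Real.Gamma_add_one (by norm_num), Real.Gamma_one_half_eq]
    ring
  rw [e1, e2, eg1, eg2, hc]
  have hsplit : Real.sqrt (2 * π * γ ^ 2) = Real.sqrt π * Real.sqrt (2 * γ ^ 2) := by
    rw [show (2 * π * γ ^ 2) = π * (2 * γ ^ 2) by ring, Real.sqrt_mul Real.pi_pos.le]
  rw [hsplit]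
  have hs : (0:ℝ) < Real.sqrt π := Real.sqrt_pos.2 Real.pi_pos
  have hA : (0:ℝ) < Real.sqrt (2 * γ ^ 2) := Real.sqrt_pos.2 h2γ
  have hs2 : Real.sqrt π ^ 2 = π := Real.sq_sqrt Real.pi_pos.le
  have hA2 : Real.sqrt (2 * γ ^ 2) ^ 2 = 2 * γ ^ 2 := Real.sq_sqrt h2γ.le
  have hπ : (0:ℝ) < π := Real.pi_pos
  set s : ℝ := Real.sqrt π with hsdef
  set a : ℝ := Real.sqrt (2 * γ ^ 2) with hadef
  clear_value s a
  rw [mul_pow, inv_pow, mul_pow, hs2, hA2]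
  field_simp
end

section
/- Let z ~ N(0, γ²) with γ > 0, and let m ~ Bernoulli(p) be independent of z, 0 < p < 1. Then E[(1/p) m · max(0, z)] = γ/√(2π) and Var[(1/p) m · max(0, z)] = ((π/p − 1)/(2π)) γ². -/
open MeasureTheory ProbabilityTheory

section DropoutAux

open Real Filter Set

open MeasureTheory ProbabilityTheory Real Filter Set

lemma integral_id_mul_exp_Ioi {b : ℝ} (hb : 0 < b) :
    ∫ x in Set.Ioi (0:ℝ), x * Real.exp (-b * x ^ 2) = (2 * b)⁻¹ := by
  have hb2 : (2*b) ≠ 0 := by positivity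
  have A : ∀ x ∈ Set.Ici (0:ℝ), HasDerivAt (fun y => -(2*b)⁻¹ * Real.exp (-b * y ^ 2))
      (x * Real.exp (-b * x ^ 2)) x := by
    intro x _
    have h := (((hasDerivAt_pow 2 x).const_mul (-b)).exp).const_mul (-(2*b)⁻¹)
    refine h.congr_deriv ?_
    field_simp
    ring
  have B : Filter.Tendsto (fun y : ℝ => -(2*b)⁻¹ * Real.exp (-b * y ^ 2))
      Filter.atTop (nhds (-(2*b)⁻¹ * 0)) := by
    refine Filter.Tendsto.const_mul _ ?_
    exact Real.tendsto_exp_atBot.comp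
      ((tendsto_pow_atTop two_ne_zero).const_mul_atTop_of_neg (neg_lt_zero.2 hb))
  have h := integral_Ioi_of_hasDerivAt_of_tendsto' A
    (integrable_mul_exp_neg_mul_sq hb).integrableOn B
  simpa using h

lemma integrable_sq_mul_exp {b : ℝ} (hb : 0 < b) :
    Integrable (fun x : ℝ => x ^ 2 * Real.exp (-b * x ^ 2)) := by
  have h := integrable_rpow_mul_exp_neg_mul_sq hb (s := 2) (by norm_num)
  have hrw : ∀ x : ℝ, x ^ (2:ℝ) = x ^ 2 := fun x => by
    rw [show (2:ℝ) = ((2:ℕ):ℝ) by norm_num, Real.rpow_natCast]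
  simpa [hrw] using h

lemma integral_sq_mul_exp_Ioi {b : ℝ} (hb : 0 < b) :
    ∫ x in Set.Ioi (0:ℝ), x ^ 2 * Real.exp (-b * x ^ 2)
      = (2*b)⁻¹ * (Real.sqrt (π / b) / 2) := by
  have hb2 : (2*b) ≠ 0 := by positivity
  have A : ∀ x ∈ Set.Ici (0:ℝ), HasDerivAt (fun y => -(2*b)⁻¹ * (y * Real.exp (-b * y ^ 2)))
      (x ^ 2 * Real.exp (-b * x ^ 2) - (2*b)⁻¹ * Real.exp (-b * x ^ 2)) x := by
    intro x _
    have h1 : HasDerivAt (fun y : ℝ => y * Real.exp (-b * y ^ 2))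
        (1 * Real.exp (-b*x^2) + x * (Real.exp (-b*x^2) * (-b * (2 * x ^ 1)))) x :=
      (hasDerivAt_id x).mul (((hasDerivAt_pow 2 x).const_mul (-b)).exp)
    have h2 := h1.const_mul (-(2*b)⁻¹)
    refine h2.congr_deriv ?_
    field_simp
    ring
  have B : Filter.Tendsto (fun y : ℝ => -(2*b)⁻¹ * (y * Real.exp (-b * y ^ 2)))
      Filter.atTop (nhds (-(2*b)⁻¹ * 0)) := by
    refine Filter.Tendsto.const_mul _ ?_
    have h0 : Filter.Tendsto (fun x : ℝ => Real.exp (-(1/2) * x)) Filter.atTop (nhds 0) := by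
      apply Real.tendsto_exp_atBot.comp
      exact tendsto_id.const_mul_atTop_of_neg (by norm_num)
    have h := (rpow_mul_exp_neg_mul_sq_isLittleO_exp_neg hb 1).isBigO.trans_tendsto h0
    simpa [Real.rpow_one] using h
  have hint2 := integrable_sq_mul_exp hb
  have hintc : Integrable (fun x : ℝ => (2*b)⁻¹ * Real.exp (-b * x ^ 2)) :=
    (integrable_exp_neg_mul_sq hb).const_mul _
  have key := integral_Ioi_of_hasDerivAt_of_tendsto' A
    ((hint2.sub hintc).integrableOn) B
  rw [integral_sub hint2.integrableOn hintc.integrableOn] at key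
  have hc : ∫ x in Set.Ioi (0:ℝ), (2*b)⁻¹ * Real.exp (-b*x^2)
      = (2*b)⁻¹ * (Real.sqrt (π/b) / 2) := by
    rw [integral_const_mul, integral_gaussian_Ioi]
  simp only [mul_zero, zero_mul, neg_zero, zero_sub, neg_neg, zero_pow, Real.exp_zero] at key
  have : ∫ x in Set.Ioi (0:ℝ), x ^ 2 * Real.exp (-b * x ^ 2)
      = ∫ x in Set.Ioi (0:ℝ), (2*b)⁻¹ * Real.exp (-b*x^2) := by linarith [key]
  rw [this, hc]

end DropoutAux

/-- A real random variable `m` is Bernoulli with parameter `p`. -/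
def IsBernoulli {Ω : Type*} [MeasurableSpace Ω] (μ : Measure Ω) (p : ℝ) (m : Ω → ℝ) : Prop :=
  Measurable m ∧ (∀ ω, m ω = 0 ∨ m ω = 1) ∧ μ {ω | m ω = 1} = ENNReal.ofReal p

/-- Dropout of the ReLU of a centered Gaussian: if `z ~ N(0, γ²)`, `γ > 0`, and
`m ~ Bernoulli(p)` is independent of `z` with `0 < p < 1`, then
`E[(1/p) m max(0,z)] = γ/√(2π)` and `Var[(1/p) m max(0,z)] = ((π/p − 1)/(2π)) γ²`. -/
theorem dropout_relu_gaussian {Ω : Type*} [MeasurableSpace Ω] (μ : Measure Ω)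
    [IsProbabilityMeasure μ] (γ p : ℝ) (hγ : 0 < γ) (hp0 : 0 < p) (hp1 : p < 1)
    (z m : Ω → ℝ) (hz : Measurable z)
    (hzlaw : Measure.map z μ = gaussianReal 0 (Real.toNNReal (γ ^ 2)))
    (hm : IsBernoulli μ p m) (hind : IndepFun m z μ) :
    (∫ ω, (1 / p) * m ω * max 0 (z ω) ∂μ) = γ / Real.sqrt (2 * Real.pi) ∧
      variance (fun ω => (1 / p) * m ω * max 0 (z ω)) μ
        = ((Real.pi / p - 1) / (2 * Real.pi)) * γ ^ 2 := by

  classical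
  obtain ⟨hm_meas, hm01, hm_p⟩ := hm
  have hγ2 : (0:ℝ) < γ ^ 2 := by positivity
  set v : NNReal := Real.toNNReal (γ ^ 2) with hv_def
  have hv0 : v ≠ 0 := by
    simp only [hv_def, ne_eq, Real.toNNReal_eq_zero, not_le]
    exact hγ2
  have hvcoe : (v : ℝ) = γ ^ 2 := Real.coe_toNNReal _ hγ2.le
  set b : ℝ := (2 * γ ^ 2)⁻¹ with hb_def
  have hb : 0 < b := by positivity
  set c : ℝ := (γ * Real.sqrt (2 * Real.pi))⁻¹ with hc_def
  have hsqrtpos : 0 < Real.sqrt (2 * Real.pi) := Real.sqrt_pos.mpr (by positivity)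
  have hc0 : 0 < c := by positivity
  have hpdf : ∀ x, gaussianPDFReal 0 v x = c * Real.exp (-b * x ^ 2) := by
    intro x
    simp only [gaussianPDFReal_def]
    have h1 : Real.sqrt (2 * Real.pi * (v:ℝ)) = γ * Real.sqrt (2 * Real.pi) := by
      rw [hvcoe, mul_comm (2 * Real.pi) (γ^2), Real.sqrt_mul (sq_nonneg γ), Real.sqrt_sq hγ.le]
    have h2 : -(x - 0) ^ 2 / (2 * (v:ℝ)) = -b * x ^ 2 := by
      rw [hvcoe, hb_def]
      field_simp
      ring
    rw [h1, h2, hc_def]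
  -- integral against the Gaussian measure as a Lebesgue integral
  have hgauss_int : ∀ g : ℝ → ℝ, ∫ x, g x ∂(gaussianReal 0 v)
      = ∫ x, gaussianPDFReal 0 v x * g x := by
    intro g
    rw [gaussianReal_of_var_ne_zero _ hv0,
      show gaussianPDF 0 v = fun x => ((gaussianPDFReal 0 v x).toNNReal : ENNReal) from rfl,
      integral_withDensity_eq_integral_smul ((measurable_gaussianPDFReal 0 v).real_toNNReal) g]
    congr 1 with x
    simp [NNReal.smul_def, Real.coe_toNNReal _ (gaussianPDFReal_nonneg 0 v x)]
  have hR : Measurable fun x : ℝ => max 0 x := measurable_const.max measurable_id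
  -- pointwise identities turning the integrands into indicators
  have hptw1 : ∀ x : ℝ, gaussianPDFReal 0 v x * max 0 x
      = (Set.Ioi (0:ℝ)).indicator (fun x => c * (x * Real.exp (-b * x ^ 2))) x := by
    intro x
    rcases le_or_gt x 0 with hx | hx
    · rw [Set.indicator_of_notMem (by simpa using hx), max_eq_left hx, mul_zero]
    · rw [Set.indicator_of_mem (Set.mem_Ioi.mpr hx), hpdf, max_eq_right hx.le]; ring
  have hptw2 : ∀ x : ℝ, gaussianPDFReal 0 v x * (max 0 x) ^ 2
      = (Set.Ioi (0:ℝ)).indicator (fun x => c * (x ^ 2 * Real.exp (-b * x ^ 2))) x := by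
    intro x
    rcases le_or_gt x 0 with hx | hx
    · rw [Set.indicator_of_notMem (by simpa using hx), max_eq_left hx]
      simp
    · rw [Set.indicator_of_mem (Set.mem_Ioi.mpr hx), hpdf, max_eq_right hx.le]; ring
  -- Gaussian moments of the ReLU
  have hmean : ∫ x, max 0 x ∂(gaussianReal 0 v) = γ / Real.sqrt (2 * Real.pi) := by
    rw [hgauss_int, integral_congr_ae (Filter.EventuallyEq.of_eq (funext hptw1)),
      MeasureTheory.integral_indicator measurableSet_Ioi, integral_const_mul,
      integral_id_mul_exp_Ioi hb, hc_def, hb_def]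
    rw [show (2 * (2 * γ ^ 2)⁻¹)⁻¹ = γ ^ 2 by field_simp]
    field_simp
  have hsm : ∫ x, (max 0 x) ^ 2 ∂(gaussianReal 0 v) = γ ^ 2 / 2 := by
    rw [hgauss_int, integral_congr_ae (Filter.EventuallyEq.of_eq (funext hptw2)),
      MeasureTheory.integral_indicator measurableSet_Ioi, integral_const_mul,
      integral_sq_mul_exp_Ioi hb]
    have h3 : Real.sqrt (Real.pi / b) = γ * Real.sqrt (2 * Real.pi) := by
      rw [hb_def, show Real.pi / (2*γ^2)⁻¹ = γ ^ 2 * (2 * Real.pi) by field_simp,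
        Real.sqrt_mul (sq_nonneg γ), Real.sqrt_sq hγ.le]
    rw [h3, hc_def, hb_def]
    rw [show (2 * (2 * γ ^ 2)⁻¹)⁻¹ = γ ^ 2 by field_simp]
    field_simp
  -- integrability over the Gaussian measure
  have hint_with : ∀ g : ℝ → ℝ,
      Integrable (fun x => gaussianPDFReal 0 v x * g x) volume →
      Integrable g (gaussianReal 0 v) := by
    intro g hig
    rw [gaussianReal_of_var_ne_zero _ hv0,
      show gaussianPDF 0 v = fun x => ((gaussianPDFReal 0 v x).toNNReal : ENNReal) from rfl,
      integrable_withDensity_iff_integrable_smul ((measurable_gaussianPDFReal 0 v).real_toNNReal)]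
    refine hig.congr (Filter.Eventually.of_forall fun x => ?_)
    simp [NNReal.smul_def, Real.coe_toNNReal _ (gaussianPDFReal_nonneg 0 v x)]
  have hintR : Integrable (fun x : ℝ => max 0 x) (gaussianReal 0 v) := by
    refine hint_with _ ?_
    refine (((integrable_mul_exp_neg_mul_sq hb).const_mul c).indicator
      measurableSet_Ioi).congr (Filter.Eventually.of_forall fun x => (hptw1 x).symm)
  have hintR2 : Integrable (fun x : ℝ => (max 0 x) ^ 2) (gaussianReal 0 v) := by
    refine hint_with _ ?_
    refine (((integrable_sq_mul_exp hb).const_mul c).indicator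
      measurableSet_Ioi).congr (Filter.Eventually.of_forall fun x => (hptw2 x).symm)
  -- transfer to μ via the law of z
  have hRz_int : Integrable (fun ω => max 0 (z ω)) μ := by
    have h := (integrable_map_measure hR.aestronglyMeasurable hz.aemeasurable).mp
      (by rwa [hzlaw])
    exact h
  have hR2z_int : Integrable (fun ω => (max 0 (z ω)) ^ 2) μ := by
    have h := (integrable_map_measure (hR.pow_const 2).aestronglyMeasurable
      hz.aemeasurable).mp (by rwa [hzlaw])
    exact h
  have hRz_val : ∫ ω, max 0 (z ω) ∂μ = γ / Real.sqrt (2 * Real.pi) := by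
    rw [← hmean, ← hzlaw, integral_map hz.aemeasurable hR.aestronglyMeasurable]
  have hR2z_val : ∫ ω, (max 0 (z ω)) ^ 2 ∂μ = γ ^ 2 / 2 := by
    rw [← hsm, ← hzlaw, integral_map hz.aemeasurable (hR.pow_const 2).aestronglyMeasurable]
  -- Bernoulli facts
  set s : Set Ω := {ω | m ω = 1} with hs_def
  have hs : MeasurableSet s := hm_meas (measurableSet_singleton 1)
  have hm_ind : m = s.indicator (fun _ => (1:ℝ)) := by
    funext ω
    rcases hm01 ω with h | h
    · have hω : ω ∉ s := by simp [hs_def, h]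
      simp [Set.indicator_of_notMem hω, h]
    · simp [Set.indicator_of_mem (show ω ∈ s from h), h]
  have hm_int : Integrable m μ := by
    rw [hm_ind]; exact (integrable_const (1:ℝ)).indicator hs
  have hm_avg : ∫ ω, m ω ∂μ = p := by
    rw [hm_ind, MeasureTheory.integral_indicator_const (1:ℝ) hs]
    simp only [smul_eq_mul, mul_one]
    rw [measureReal_def, hm_p, ENNReal.toReal_ofReal hp0.le]
  -- independence products
  have hind1 : IndepFun m (fun ω => max 0 (z ω)) μ := hind.comp measurable_id hR
  have hind2 : IndepFun m (fun ω => (max 0 (z ω)) ^ 2) μ :=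
    hind.comp measurable_id (hR.pow_const 2)
  have hprod1 : ∫ ω, m ω * max 0 (z ω) ∂μ = p * (γ / Real.sqrt (2 * Real.pi)) := by
    have h := hind1.integral_mul_eq_mul_integral hm_int.aestronglyMeasurable hRz_int.aestronglyMeasurable
    rw [← hm_avg, ← hRz_val]
    exact h
  have hprod2 : ∫ ω, m ω * (max 0 (z ω)) ^ 2 ∂μ = p * (γ ^ 2 / 2) := by
    have h := hind2.integral_mul_eq_mul_integral hm_int.aestronglyMeasurable hR2z_int.aestronglyMeasurable
    rw [← hm_avg, ← hR2z_val]
    exact h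
  -- first moment
  have hEY : ∫ ω, (1 / p) * m ω * max 0 (z ω) ∂μ = γ / Real.sqrt (2 * Real.pi) := by
    simp_rw [mul_assoc]
    rw [integral_const_mul, hprod1]
    field_simp
  refine ⟨hEY, ?_⟩
  -- Memℒp for the variance formula
  have hmemR : MemLp (fun ω => max 0 (z ω)) 2 μ := by
    have hg : MemLp (fun x => max 0 x) 2 (Measure.map z μ) := by
      rw [hzlaw]
      exact (memLp_two_iff_integrable_sq hR.aestronglyMeasurable).2 hintR2
    exact (memLp_map_measure_iff hR.aestronglyMeasurable hz.aemeasurable).1 hg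
  have hmemY : MemLp (fun ω => (1 / p) * m ω * max 0 (z ω)) 2 μ := by
    have h1 : MemLp (fun ω => (1 / p) * max 0 (z ω)) 2 μ := hmemR.const_mul (1 / p)
    refine h1.of_le ?_ (Filter.Eventually.of_forall fun ω => ?_)
    · exact ((measurable_const.mul hm_meas).mul (hR.comp hz)).aestronglyMeasurable
    · rcases hm01 ω with h | h
      · simp only [h, Real.norm_eq_abs, mul_zero, zero_mul, abs_zero]
        positivity
      · exact le_of_eq (by rw [h, mul_one])
  -- second moment
  have hEY2 : ∫ ω, ((1 / p) * m ω * max 0 (z ω)) ^ 2 ∂μ = γ ^ 2 / (2 * p) := by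
    have hrw : ∀ ω, ((1 / p) * m ω * max 0 (z ω)) ^ 2
        = (1 / p) ^ 2 * (m ω * (max 0 (z ω)) ^ 2) := by
      intro ω
      rcases hm01 ω with h | h <;> simp [h] <;> ring
    simp_rw [hrw]
    rw [integral_const_mul, hprod2]
    field_simp
  rw [variance_eq_sub hmemY]
  have hY2 : (fun ω => (1 / p) * m ω * max 0 (z ω)) ^ 2
      = fun ω => ((1 / p) * m ω * max 0 (z ω)) ^ 2 := rfl
  rw [hY2, hEY2, hEY]
  rw [div_pow, Real.sq_sqrt (by positivity : (0:ℝ) ≤ 2 * Real.pi)]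
  have hπ : Real.pi ≠ 0 := Real.pi_ne_zero
  field_simp
end

section
/- Let x = (x₁,…,x_n) be a random vector with finite second moments, m₁,…,m_n i.i.d. Bernoulli(p) independent of x, 0<p<1, and let w ∈ ℝⁿ be a fixed weight row. If Σ_{j≠k} w_j w_k E[x_j x_k] > 0, then Var[(1/p) Σ_j m_j w_j x_j] (PreDropout) is strictly smaller than Var[(1/p) m Σ_j w_j x_j] (PostDropout), where in the latter m is a single Bernoulli(p) variable independent of x. -/
open MeasureTheory ProbabilityTheory Finset

section Aux
variable {Ω : Type*} [MeasurableSpace Ω] {μ : Measure Ω} {p : ℝ} {m : Ω → ℝ}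

lemma bern_sq (h : IsBernoulli μ p m) (ω : Ω) : m ω * m ω = m ω := by
  rcases h.2.1 ω with h | h <;> simp [h]

lemma bern_abs_le (h : IsBernoulli μ p m) (ω : Ω) : |m ω| ≤ 1 := by
  rcases h.2.1 ω with h | h <;> simp [h]

lemma bern_integral [IsProbabilityMeasure μ] (h : IsBernoulli μ p m) (hp : 0 ≤ p) :
    ∫ ω, m ω ∂μ = p := by
  have hs : MeasurableSet {ω | m ω = 1} := h.1 (measurableSet_singleton 1)
  have he : m = Set.indicator {ω | m ω = 1} (fun _ => (1:ℝ)) := by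
    funext ω
    rcases h.2.1 ω with h | h <;> simp [Set.indicator, h]
  rw [he, integral_indicator_const _ hs, measureReal_def, h.2.2]
  simp [ENNReal.toReal_ofReal hp]

lemma L2mul {f g : Ω → ℝ} (hf : MemLp f 2 μ) (hg : MemLp g 2 μ) :
    Integrable (fun ω => f ω * g ω) μ :=
  memLp_one_iff_integrable.1 (hg.smul hf)

end Aux

/-- Proposition 2: if `Σ_{j≠k} w_j w_k E[x_j x_k] > 0`, then the PreDropout
variance `Var[(1/p) Σ_j m_j w_j x_j]` is strictly smaller than the PostDropout
variance `Var[(1/p) m Σ_j w_j x_j]`. -/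


theorem preDropout_var_lt_postDropout_var {Ω : Type*} [MeasurableSpace Ω]
    (μ : Measure Ω) [IsProbabilityMeasure μ] (n : ℕ) (p : ℝ)
    (hp0 : 0 < p) (hp1 : p < 1)
    (x : Ω → Fin n → ℝ) (hx : ∀ j, MemLp (fun ω => x ω j) 2 μ)
    (hxmeas : Measurable x)
    (m : Fin n → Ω → ℝ) (hmB : ∀ j, IsBernoulli μ p (m j))
    (hmiid : iIndepFun m μ)
    (hmident : ∀ j k, Measure.map (m j) μ = Measure.map (m k) μ)
    (hmx : IndepFun (fun ω j => m j ω) x μ)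
    (m₀ : Ω → ℝ) (hm₀ : IsBernoulli μ p m₀) (hm₀x : IndepFun m₀ x μ)
    (w : Fin n → ℝ)
    (hpos : 0 < ∑ j, ∑ k ∈ univ \ {j}, w j * w k * ∫ ω, x ω j * x ω k ∂μ) :
    variance (fun ω => (1 / p) * ∑ j, m j ω * w j * x ω j) μ
      < variance (fun ω => (1 / p) * m₀ ω * ∑ j, w j * x ω j) μ := by
  have hxm : ∀ j, Measurable fun ω => x ω j := fun j => (measurable_pi_apply j).comp hxmeas
  have hmm : ∀ j, Measurable (m j) := fun j => (hmB j).1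
  have hm₀m : Measurable m₀ := hm₀.1
  have hxint : ∀ j, Integrable (fun ω => x ω j) μ := fun j => (hx j).integrable one_le_two
  have hmint : ∀ j, ∫ ω, m j ω ∂μ = p := fun j => bern_integral (hmB j) hp0.le
  -- L2 membership of the pre-dropout summands
  have hY2 : ∀ j, MemLp (fun ω => m j ω * w j * x ω j) 2 μ := by
    intro j
    refine ((hx j).const_mul (w j)).of_le
      (((hmm j).mul measurable_const).mul (hxm j)).aestronglyMeasurable ?_
    filter_upwards with ω
    simp only [Real.norm_eq_abs]
    rw [mul_assoc, abs_mul]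
    exact mul_le_of_le_one_left (abs_nonneg _) (bern_abs_le (hmB j) ω)
  -- L2 membership of the sums
  have hg2 : MemLp (fun ω => ∑ j, w j * x ω j) 2 μ := by
    have h0 := memLp_finset_sum' (μ := μ) (p := 2) univ
      (fun (j : Fin n) (_ : j ∈ univ) => (hx j).const_mul (w j))
    have e : (fun ω => ∑ j, w j * x ω j) = ∑ i : Fin n, fun ω => w i * x ω i := by
      funext ω; simp
    rw [e]; exact h0
  have hgm : Measurable fun ω => ∑ j, w j * x ω j :=
    Finset.measurable_sum univ fun j _ => (hxm j).const_mul (w j)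
  have hSpre : MemLp (fun ω => (1 / p) * ∑ j, m j ω * w j * x ω j) 2 μ := by
    have h0 := memLp_finset_sum' (μ := μ) (p := 2) univ
      (fun (j : Fin n) (_ : j ∈ univ) => hY2 j)
    have e : (fun ω => ∑ j, m j ω * w j * x ω j)
        = ∑ i : Fin n, fun ω => m i ω * w i * x ω i := by funext ω; simp
    have h1 : MemLp (fun ω => ∑ j, m j ω * w j * x ω j) 2 μ := by rw [e]; exact h0
    exact h1.const_mul _
  have hm₀g2 : MemLp (fun ω => m₀ ω * ∑ j, w j * x ω j) 2 μ := by
    refine hg2.of_le (hm₀m.mul hgm).aestronglyMeasurable ?_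
    filter_upwards with ω
    simp only [Real.norm_eq_abs, abs_mul]
    exact mul_le_of_le_one_left (abs_nonneg _) (bern_abs_le hm₀ ω)
  have hSpost : MemLp (fun ω => (1 / p) * m₀ ω * ∑ j, w j * x ω j) 2 μ := by
    have := hm₀g2.const_mul (1 / p)
    simpa [mul_assoc] using this
  -- cross independence
  have hcross : ∀ (f : (Fin n → ℝ) → ℝ), Measurable f →
      ∫ ω, f (fun j => m j ω) * f (x ω) ∂μ
        = (∫ ω, f (fun j => m j ω) ∂μ) * ∫ ω, f (x ω) ∂μ := by
    intro f hf
    exact (hmx.comp hf hf).integral_mul_eq_mul_integral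
      (hf.comp (measurable_pi_lambda _ fun j => hmm j)).aestronglyMeasurable
      (hf.comp hxmeas).aestronglyMeasurable
  -- key term integrals
  have hEmm : ∀ j k, j ≠ k → ∫ ω, m j ω * m k ω ∂μ = p * p := by
    intro j k hjk
    have h := (hmiid.indepFun hjk).integral_mul_eq_mul_integral (hmm j).aestronglyMeasurable
      (hmm k).aestronglyMeasurable
    rw [hmint j, hmint k] at h
    exact h
  have hmmx : ∀ j k, ∫ ω, (m j ω * m k ω) * (x ω j * x ω k) ∂μ
      = (∫ ω, m j ω * m k ω ∂μ) * ∫ ω, x ω j * x ω k ∂μ := by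
    intro j k
    exact hcross (fun v => v j * v k) ((measurable_pi_apply j).mul (measurable_pi_apply k))
  have hYY : ∀ j k, ∫ ω, (m j ω * w j * x ω j) * (m k ω * w k * x ω k) ∂μ
      = (if j = k then p else p * p) * (w j * w k * ∫ ω, x ω j * x ω k ∂μ) := by
    intro j k
    have e1 : (fun ω => (m j ω * w j * x ω j) * (m k ω * w k * x ω k))
        = fun ω => (w j * w k) * ((m j ω * m k ω) * (x ω j * x ω k)) := by
      funext ω; ring
    rw [e1, integral_const_mul, hmmx j k]
    by_cases h : j = k
    · subst h
      have e2 : (fun ω => m j ω * m j ω) = m j := funext fun ω => bern_sq (hmB j) ω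
      rw [e2, hmint j]
      rw [if_pos rfl]; ring
    · rw [hEmm j k h]
      rw [if_neg h]; ring
  have hYYint : ∀ j k, Integrable
      (fun ω => (m j ω * w j * x ω j) * (m k ω * w k * x ω k)) μ :=
    fun j k => L2mul (hY2 j) (hY2 k)
  -- means
  have hmeanpre : ∫ ω, (1 / p) * ∑ j, m j ω * w j * x ω j ∂μ = ∑ j, w j * ∫ ω, x ω j ∂μ := by
    rw [integral_const_mul, integral_finset_sum _ (fun j _ => ((hY2 j).integrable one_le_two))]
    have e : ∀ j, ∫ ω, m j ω * w j * x ω j ∂μ = p * (w j * ∫ ω, x ω j ∂μ) := by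
      intro j
      have e1 : (fun ω => m j ω * w j * x ω j) = fun ω => w j * (m j ω * x ω j) := by
        funext ω; ring
      have e2 := hcross (fun v => v j) (measurable_pi_apply j)
      rw [e1, integral_const_mul, e2, hmint j]; ring
    rw [Finset.sum_congr rfl fun j _ => e j, ← Finset.mul_sum]
    field_simp
  have hgint : ∫ ω, ∑ j, w j * x ω j ∂μ = ∑ j, w j * ∫ ω, x ω j ∂μ := by
    rw [integral_finset_sum _ (fun j _ => (hxint j).const_mul (w j))]
    exact Finset.sum_congr rfl fun j _ => integral_const_mul _ _
  have hm₀gint : ∫ ω, m₀ ω * ∑ j, w j * x ω j ∂μ = p * ∑ j, w j * ∫ ω, x ω j ∂μ := by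
    have h1 : IndepFun m₀ (fun ω => ∑ j, w j * x ω j) μ :=
      hm₀x.comp measurable_id
        (show Measurable fun v : Fin n → ℝ => ∑ j, w j * v j from
          Finset.measurable_sum univ fun j _ => (measurable_pi_apply j).const_mul (f := fun v : Fin n → ℝ => v j) (w j))
    have h := h1.integral_mul_eq_mul_integral hm₀m.aestronglyMeasurable hgm.aestronglyMeasurable
    rw [bern_integral hm₀ hp0.le, hgint] at h
    exact h
  have hmeanpost : ∫ ω, (1 / p) * m₀ ω * ∑ j, w j * x ω j ∂μ
      = ∑ j, w j * ∫ ω, x ω j ∂μ := by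
    have e1 : (fun ω => (1 / p) * m₀ ω * ∑ j, w j * x ω j)
        = fun ω => (1 / p) * (m₀ ω * ∑ j, w j * x ω j) := by funext ω; ring
    rw [e1, integral_const_mul, hm₀gint]
    field_simp
  -- second moments
  have hsqpre : ∫ ω, ((1 / p) * ∑ j, m j ω * w j * x ω j) ^ 2 ∂μ
      = (1 / p) ^ 2 * ∑ j, ∑ k, (if j = k then p else p * p)
          * (w j * w k * ∫ ω, x ω j * x ω k ∂μ) := by
    have e1 : (fun ω => ((1 / p) * ∑ j, m j ω * w j * x ω j) ^ 2)
        = fun ω => (1 / p) ^ 2 * ∑ j, ∑ k,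
            (m j ω * w j * x ω j) * (m k ω * w k * x ω k) := by
      funext ω
      rw [mul_pow, pow_two (∑ j, m j ω * w j * x ω j), Finset.sum_mul_sum]
    rw [e1, integral_const_mul,
      integral_finset_sum _ (fun j _ => integrable_finset_sum _ (fun k _ => hYYint j k))]
    congr 1
    refine Finset.sum_congr rfl fun j _ => ?_
    rw [integral_finset_sum _ (fun k _ => hYYint j k)]
    exact Finset.sum_congr rfl fun k _ => hYY j k
  have hgsq : ∫ ω, (∑ j, w j * x ω j) ^ 2 ∂μ
      = ∑ j, ∑ k, w j * w k * ∫ ω, x ω j * x ω k ∂μ := by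
    have e1 : (fun ω => (∑ j, w j * x ω j) ^ 2)
        = fun ω => ∑ j, ∑ k, w j * w k * (x ω j * x ω k) := by
      funext ω
      rw [pow_two, Finset.sum_mul_sum]
      exact Finset.sum_congr rfl fun j _ => Finset.sum_congr rfl fun k _ => by ring
    have hint : ∀ (j k : Fin n), Integrable (fun ω => w j * w k * (x ω j * x ω k)) μ :=
      fun j k => (L2mul (hx j) (hx k)).const_mul _
    rw [e1, integral_finset_sum _ (fun j _ => integrable_finset_sum _ (fun k _ => hint j k))]
    refine Finset.sum_congr rfl fun j _ => ?_
    rw [integral_finset_sum _ (fun k _ => hint j k)]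
    exact Finset.sum_congr rfl fun k _ => integral_const_mul _ _
  have hsqpost : ∫ ω, ((1 / p) * m₀ ω * ∑ j, w j * x ω j) ^ 2 ∂μ
      = (1 / p) ^ 2 * (p * ∑ j, ∑ k, w j * w k * ∫ ω, x ω j * x ω k ∂μ) := by
    have e1 : (fun ω => ((1 / p) * m₀ ω * ∑ j, w j * x ω j) ^ 2)
        = fun ω => (1 / p) ^ 2 * (m₀ ω * (∑ j, w j * x ω j) ^ 2) := by
      funext ω
      have h := bern_sq hm₀ ω
      calc ((1 / p) * m₀ ω * ∑ j, w j * x ω j) ^ 2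
          = (1 / p) ^ 2 * ((m₀ ω * m₀ ω) * (∑ j, w j * x ω j) ^ 2) := by ring
        _ = (1 / p) ^ 2 * (m₀ ω * (∑ j, w j * x ω j) ^ 2) := by rw [h]
    have h1 : IndepFun m₀ (fun ω => (∑ j, w j * x ω j) ^ 2) μ :=
      hm₀x.comp measurable_id
        (show Measurable fun v : Fin n → ℝ => (∑ j, w j * v j) ^ 2 from
          (Finset.measurable_sum univ fun j _ =>
            (measurable_pi_apply j).const_mul (f := fun v : Fin n → ℝ => v j) (w j)).pow_const 2)
    have h := h1.integral_mul_eq_mul_integral hm₀m.aestronglyMeasurable (hgm.pow_const 2).aestronglyMeasurable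
    rw [bern_integral hm₀ hp0.le, hgsq] at h
    rw [e1, integral_const_mul]
    rw [show ∫ ω, m₀ ω * (∑ j, w j * x ω j) ^ 2 ∂μ
        = p * ∑ j, ∑ k, w j * w k * ∫ ω, x ω j * x ω k ∂μ from h]
  -- put everything together
  set Exx : Fin n → Fin n → ℝ := fun j k => ∫ ω, x ω j * x ω k ∂μ with hExx
  set B : ℝ := ∑ j, ∑ k ∈ univ \ {j}, w j * w k * Exx j k with hB
  set A : ℝ := ∑ j, w j * w j * Exx j j with hA
  have hsplit1 : (∑ j, ∑ k, (if j = k then p else p * p) * (w j * w k * Exx j k))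
      = p * p * B + p * A := by
    have e : ∀ j : Fin n, (∑ k, (if j = k then p else p * p) * (w j * w k * Exx j k))
        = (∑ k ∈ univ \ {j}, p * p * (w j * w k * Exx j k)) + p * (w j * w j * Exx j j) := by
      intro j
      rw [Finset.sum_eq_sum_sdiff_singleton_add (mem_univ j)]
      congr 1
      · refine Finset.sum_congr rfl fun k hk => ?_
        have hk' : ¬ j = k := fun h => by
          simp [h] at hk
        rw [if_neg hk']
      · rw [if_pos rfl]
    rw [Finset.sum_congr rfl fun j _ => e j, Finset.sum_add_distrib, hB, hA,
      Finset.mul_sum, Finset.mul_sum]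
    congr 1
    exact Finset.sum_congr rfl fun j _ => by rw [Finset.mul_sum]
  have hsplit2 : (∑ j, ∑ k, w j * w k * Exx j k) = B + A := by
    have e : ∀ j : Fin n, (∑ k, w j * w k * Exx j k)
        = (∑ k ∈ univ \ {j}, w j * w k * Exx j k) + w j * w j * Exx j j := by
      intro j
      rw [Finset.sum_eq_sum_sdiff_singleton_add (mem_univ j)]
    rw [Finset.sum_congr rfl fun j _ => e j, Finset.sum_add_distrib, hB, hA]
  have hBpos : 0 < B := hpos
  rw [variance_eq_sub hSpre, variance_eq_sub hSpost]
  simp only [Pi.pow_apply]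
  rw [hsqpre, hsqpost, hmeanpre, hmeanpost, hsplit1, hsplit2]
  apply sub_lt_sub_right
  have hp2 : (0:ℝ) < (1 / p) ^ 2 := by positivity
  refine mul_lt_mul_of_pos_left ?_ hp2
  nlinarith [mul_pos (mul_pos hp0 hBpos) (sub_pos.2 hp1)]
end
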